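/- For a parameter a > 1, k > 0, n ≥ 3, let P and Q be the explicit distributions: p₁ = (a-1)/a, pᵢ = (a-1)/aⁱ (2 ≤ i ≤ n-1), pₙ = 1/a^{n-1}; qᵢ = pᵢ/2^{k a^{i-1}} (i ≥ 2), q₁ = 1 - Σ_{i=2}^n qᵢ. Then for every r > 1 of the form r = a^{m} for integer m with 1 ≤ m ≤ n-1, the truncated distribution P̃ = (p₁, …, p_{m+1}, 0, …, 0)/normalization satisfies ‖P - P̃‖₁ ≤ 2/r and (1 - 1/r) P̃(i)/2^{rk} ≤ Q(i) for all i. -/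

import Mathlib

open Finset

lemma geo_sum (a : ℝ) (ha : 1 < a) (t : ℕ) :
    ∑ j ∈ Finset.range t, (a - 1) / a ^ (j + 1) = 1 - 1 / a ^ t := by
  have ha0 : a ≠ 0 := by positivity
  induction t with
  | zero => simp
  | succ t ih =>
      rw [Finset.sum_range_succ, ih]
      have h1 : (a : ℝ) ^ t ≠ 0 := pow_ne_zero _ ha0
      have h2 : (a : ℝ) ^ (t + 1) ≠ 0 := pow_ne_zero _ ha0
      field_simp
      ring

/-- For the explicit distributions `p₁ = (a-1)/a`, `pᵢ = (a-1)/aⁱ`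
(`2 ≤ i ≤ n-1`), `pₙ = 1/a^(n-1)`, `qᵢ = pᵢ/2^(k·a^(i-1))` (`i ≥ 2`),
`q₁ = 1 - ∑_{i≥2} qᵢ` (paper index `i.val + 1`), and any `r = a^m` with
`1 ≤ m ≤ n-1`, the normalized truncation `P̃` of `p` to the first `m+1`
coordinates satisfies `‖p - P̃‖₁ ≤ 2/r` and
`(1 - 1/r) * P̃ i / 2^(r*k) ≤ q i` for all `i`. -/
theorem stmt18 (a : ℝ) (ha : 1 < a) (k : ℝ) (hk : 0 < k) (n : ℕ) (hn : 3 ≤ n)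
    (p q : Fin n → ℝ)
    (hp1 : p ⟨0, by omega⟩ = (a - 1) / a)
    (hpmid : ∀ i : Fin n, 2 ≤ i.val + 1 → i.val + 1 ≤ n - 1 →
      p i = (a - 1) / a ^ (i.val + 1))
    (hpn : p ⟨n - 1, by omega⟩ = 1 / a ^ (n - 1))
    (hq : ∀ i : Fin n, 2 ≤ i.val + 1 → q i = p i / (2 : ℝ) ^ (k * a ^ i.val))
    (hq1 : q ⟨0, by omega⟩ =
      1 - ∑ i ∈ univ.filter (fun i : Fin n => 2 ≤ i.val + 1), q i)
    (m : ℕ) (hm1 : 1 ≤ m) (hm2 : m ≤ n - 1)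
    (r : ℝ) (hr : r = a ^ m)
    (c : ℝ) (hc : c = ∑ i ∈ univ.filter (fun i : Fin n => i.val + 1 ≤ m + 1), p i)
    (Pt : Fin n → ℝ)
    (hPt : ∀ i : Fin n, Pt i = if i.val + 1 ≤ m + 1 then p i / c else 0) :
    (∑ i, |p i - Pt i|) ≤ 2 / r ∧
    ∀ i, (1 - 1 / r) * Pt i / (2 : ℝ) ^ (r * k) ≤ q i := by
  have ha0 : (0 : ℝ) < a := by linarith
  have hapow : ∀ t : ℕ, (0 : ℝ) < a ^ t := fun t => pow_pos ha0 t
  -- the value of p at non-last indices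
  have hpv : ∀ i : Fin n, i.val ≤ n - 2 → p i = (a - 1) / a ^ (i.val + 1) := by
    intro i hi
    rcases Nat.eq_zero_or_pos i.val with h0 | h1
    · have : i = ⟨0, by omega⟩ := Fin.ext h0
      rw [this, hp1]
      simp [h0]
    · exact hpmid i (by omega) (by omega)
  have hppos : ∀ i : Fin n, 0 < p i := by
    intro i
    by_cases hi : i.val ≤ n - 2
    · rw [hpv i hi]; exact div_pos (by linarith) (hapow _)
    · have hi2 : i = ⟨n - 1, by omega⟩ := Fin.ext (by show i.val = n - 1; omega)
      rw [hi2, hpn]; exact div_pos one_pos (hapow _)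
  -- sums of initial segments of p
  have key : ∀ t : ℕ, t ≤ n - 1 →
      ∑ i ∈ univ.filter (fun i : Fin n => i.val + 1 ≤ t), p i = 1 - 1 / a ^ t := by
    intro t ht
    have h1 : ∀ i ∈ univ.filter (fun i : Fin n => i.val + 1 ≤ t),
        p i = (a - 1) / a ^ (i.val + 1) := by
      intro i hi
      simp only [mem_filter, mem_univ, true_and] at hi
      exact hpv i (by omega)
    rw [Finset.sum_congr rfl h1, Finset.sum_filter,
      Fin.sum_univ_eq_sum_range (fun j => if j + 1 ≤ t then (a - 1) / a ^ (j + 1) else 0) n,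
      ← Finset.sum_filter]
    have h2 : (Finset.range n).filter (fun j => j + 1 ≤ t) = Finset.range t := by
      ext j
      simp only [mem_filter, mem_range]
      omega
    rw [h2, geo_sum a ha t]
  -- total mass of p is 1
  have hlastset : univ.filter (fun i : Fin n => ¬ (i.val + 1 ≤ n - 1))
      = {(⟨n - 1, by omega⟩ : Fin n)} := by
    ext i
    simp only [mem_filter, mem_univ, true_and, mem_singleton, Fin.ext_iff]
    have := i.isLt
    omega
  have hS : ∑ i, p i = 1 := by
    rw [← Finset.sum_filter_add_sum_filter_not univ (fun i : Fin n => i.val + 1 ≤ n - 1) p,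
      key (n - 1) le_rfl, hlastset, Finset.sum_singleton, hpn]
    have : (a : ℝ) ^ (n - 1) ≠ 0 := (hapow _).ne'
    field_simp
    ring
  -- bounds on c
  have hclow : 1 - 1 / a ^ (m + 1) ≤ c := by
    by_cases hmn : m + 1 ≤ n - 1
    · rw [hc, key (m + 1) hmn]
    · have hmeq : m = n - 1 := by omega
      have hfull : univ.filter (fun i : Fin n => i.val + 1 ≤ m + 1) = univ := by
        ext i
        simp only [mem_filter, mem_univ, true_and, iff_true]
        have := i.isLt
        omega
      rw [hc, hfull, hS]
      have h1 : (0:ℝ) < 1 / a ^ (m + 1) := div_pos one_pos (hapow _)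
      linarith
  have hcle1 : c ≤ 1 := by
    rw [hc, ← hS]
    exact Finset.sum_le_sum_of_subset_of_nonneg (Finset.filter_subset _ _)
      (fun i _ _ => (hppos i).le)
  have hcpos : 0 < c := by
    have h1 : (1:ℝ) / a ^ (m + 1) < 1 := by
      rw [div_lt_one (hapow _)]
      exact one_lt_pow₀ ha (by omega)
    linarith
  -- facts about r
  have hr1 : 1 < r := by rw [hr]; exact one_lt_pow₀ ha (by omega)
  have hrpos : 0 < r := by linarith
  have h1r : (0:ℝ) ≤ 1 - 1 / r := by
    have : 1 / r < 1 := by rw [div_lt_one hrpos]; exact hr1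
    linarith
  have h1rc : 1 - 1 / r ≤ c := by
    have h1 : (1:ℝ) / a ^ (m + 1) ≤ 1 / r := by
      rw [hr]
      apply one_div_le_one_div_of_le (hapow m)
      exact pow_le_pow_right₀ ha.le (by omega)
    linarith
  have h2rk : (1:ℝ) ≤ (2:ℝ) ^ (r * k) :=
    Real.one_le_rpow (by norm_num) (by positivity)
  have h2rkpos : (0:ℝ) < (2:ℝ) ^ (r * k) := Real.rpow_pos_of_pos (by norm_num) _
  constructor
  · -- ℓ₁ bound
    have habs : ∑ i, |p i - Pt i| = 2 * (1 - c) := by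
      rw [← Finset.sum_filter_add_sum_filter_not univ (fun i : Fin n => i.val + 1 ≤ m + 1)]
      have e1 : ∑ i ∈ univ.filter (fun i : Fin n => i.val + 1 ≤ m + 1), |p i - Pt i|
          = ∑ i ∈ univ.filter (fun i : Fin n => i.val + 1 ≤ m + 1), (p i / c - p i) := by
        apply Finset.sum_congr rfl
        intro i hi
        simp only [mem_filter, mem_univ, true_and] at hi
        rw [hPt i, if_pos hi, abs_sub_comm]
        apply abs_of_nonneg
        have hple : p i ≤ p i / c := by
          rw [le_div_iff₀ hcpos]
          nlinarith [(hppos i).le]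
        linarith
      have e2 : ∑ i ∈ univ.filter (fun i : Fin n => ¬ (i.val + 1 ≤ m + 1)), |p i - Pt i|
          = ∑ i ∈ univ.filter (fun i : Fin n => ¬ (i.val + 1 ≤ m + 1)), p i := by
        apply Finset.sum_congr rfl
        intro i hi
        simp only [mem_filter, mem_univ, true_and] at hi
        rw [hPt i, if_neg hi, sub_zero]
        exact abs_of_nonneg (hppos i).le
      have e3 : ∑ i ∈ univ.filter (fun i : Fin n => ¬ (i.val + 1 ≤ m + 1)), p i = 1 - c := by
        have := Finset.sum_filter_add_sum_filter_not univ
          (fun i : Fin n => i.val + 1 ≤ m + 1) p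
        rw [← hc] at this
        rw [← hS]
        linarith
      rw [e1, e2, e3, Finset.sum_sub_distrib, ← Finset.sum_div, ← hc, div_self hcpos.ne']
      ring
    rw [habs]
    have h1 : 1 - c ≤ 1 / a ^ (m + 1) := by linarith
    have h2 : (1:ℝ) / a ^ (m + 1) ≤ 1 / r := by
      rw [hr]
      apply one_div_le_one_div_of_le (hapow m)
      exact pow_le_pow_right₀ ha.le (by omega)
    calc 2 * (1 - c) ≤ 2 * (1 / r) := by linarith
      _ = 2 / r := by ring
  · -- pointwise bound
    intro i
    by_cases hi : i.val + 1 ≤ m + 1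
    · -- in the support of Pt
      have hPti : Pt i = p i / c := by rw [hPt i, if_pos hi]
      have hstep1 : (1 - 1 / r) * Pt i ≤ p i := by
        rw [hPti]
        have : (1 - 1 / r) * (p i / c) ≤ c * (p i / c) := by
          exact mul_le_mul_of_nonneg_right h1rc (div_nonneg (hppos i).le hcpos.le)
        have hcc : c * (p i / c) = p i := by field_simp
        linarith [this, hcc.le]
      rcases Nat.eq_zero_or_pos i.val with h0 | h1
      · -- first coordinate
        have hieq : i = ⟨0, by omega⟩ := Fin.ext h0
        have hqsum : ∑ j ∈ univ.filter (fun j : Fin n => 2 ≤ j.val + 1), q j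
            ≤ ∑ j ∈ univ.filter (fun j : Fin n => 2 ≤ j.val + 1), p j := by
          apply Finset.sum_le_sum
          intro j hj
          simp only [mem_filter, mem_univ, true_and] at hj
          rw [hq j hj]
          apply div_le_self (hppos j).le
          exact Real.one_le_rpow (by norm_num) (mul_nonneg hk.le (pow_nonneg ha0.le _))
        have hpsum : ∑ j ∈ univ.filter (fun j : Fin n => 2 ≤ j.val + 1), p j
            = 1 - (a - 1) / a := by
          have hset : univ.filter (fun j : Fin n => ¬ (2 ≤ j.val + 1))
              = {(⟨0, by omega⟩ : Fin n)} := by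
            ext j
            simp only [mem_filter, mem_univ, true_and, mem_singleton, Fin.ext_iff]
            omega
          have := Finset.sum_filter_add_sum_filter_not univ
            (fun j : Fin n => 2 ≤ j.val + 1) p
          rw [hset, Finset.sum_singleton, hp1, hS] at this
          linarith
        have hq0 : (a - 1) / a ≤ q i := by
          rw [hieq, hq1]
          linarith [hqsum, hpsum.le]
        have hp0 : p i = (a - 1) / a := by rw [hieq, hp1]
        calc (1 - 1 / r) * Pt i / (2:ℝ) ^ (r * k) ≤ p i / (2:ℝ) ^ (r * k) :=
              (div_le_div_iff_of_pos_right h2rkpos).mpr hstep1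
          _ ≤ p i / 1 := div_le_div_of_nonneg_left (hppos i).le one_pos h2rk
          _ = p i := div_one _
          _ = (a - 1) / a := hp0
          _ ≤ q i := hq0
      · -- remaining coordinates
        have hqi : q i = p i / (2:ℝ) ^ (k * a ^ i.val) := hq i (by omega)
        have hexp : k * a ^ i.val ≤ r * k := by
          rw [hr, mul_comm]
          apply mul_le_mul_of_nonneg_right _ hk.le
          exact pow_le_pow_right₀ ha.le (by omega)
        have h2le : (2:ℝ) ^ (k * a ^ i.val) ≤ (2:ℝ) ^ (r * k) :=
          Real.rpow_le_rpow_of_exponent_le (by norm_num) hexp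
        have h2pos : (0:ℝ) < (2:ℝ) ^ (k * a ^ i.val) := Real.rpow_pos_of_pos (by norm_num) _
        rw [hqi]
        calc (1 - 1 / r) * Pt i / (2:ℝ) ^ (r * k) ≤ p i / (2:ℝ) ^ (r * k) :=
              (div_le_div_iff_of_pos_right h2rkpos).mpr hstep1
          _ ≤ p i / (2:ℝ) ^ (k * a ^ i.val) :=
              div_le_div_of_nonneg_left (hppos i).le h2pos h2le
    · -- outside the support of Pt
      have hPti : Pt i = 0 := by rw [hPt i, if_neg hi]
      rw [hPti]
      have hqi : q i = p i / (2:ℝ) ^ (k * a ^ i.val) := hq i (by omega)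
      rw [hqi]
      have h2pos : (0:ℝ) < (2:ℝ) ^ (k * a ^ i.val) := Real.rpow_pos_of_pos (by norm_num) _
      have := (hppos i).le
      simp only [mul_zero, zero_div]
      positivity
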